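/- arXiv:2101.05200 — 2 statements merged into one kernel-verified Lean document; each statement's English description precedes it below -/
import Mathlib

section
/- Let N_std, N_all : (0,1) × ℕ → ℕ satisfy N_std(ε, d) ≤ C_ω·(N_all(ε/4, d) + 1)^{1+ω} for some ω > 0, C_ω ≥ 1 and all ε, d. If N_all is strongly polynomially tractable with exponent p (i.e., for every ε' > 0 there is C with N_all(ε,d) ≤ C·ε^{-(p+ε')} for all d, ε), then N_std is strongly polynomially tractable, and its exponent equals p whenever additionally N_all(ε,d) ≤ N_std(ε,d) for all ε, d. -/
/-- The set of admissible exponents of strong polynomial tractability of `N`. -/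
def sptExponents (N : ℝ → ℕ → ℕ) : Set ℝ :=
  {p' : ℝ | 0 ≤ p' ∧ ∃ C : ℝ, 0 < C ∧
    ∀ ε ∈ Set.Ioo (0 : ℝ) 1, ∀ d : ℕ, 0 < d → (N ε d : ℝ) ≤ C * ε ^ (-p')}

theorem stmt_12 (N_std N_all : ℝ → ℕ → ℕ)
    (hcomp : ∀ ω : ℝ, 0 < ω → ∃ Cω : ℝ, 1 ≤ Cω ∧
      ∀ ε ∈ Set.Ioo (0 : ℝ) 1, ∀ d : ℕ, 0 < d →
        (N_std ε d : ℝ) ≤ Cω * ((N_all (ε / 4) d : ℝ) + 1) ^ (1 + ω))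
    (p : ℝ) (hp : 0 ≤ p)
    (hall : ∀ ε' : ℝ, 0 < ε' → ∃ C : ℝ, 0 < C ∧
      ∀ ε ∈ Set.Ioo (0 : ℝ) 1, ∀ d : ℕ, 0 < d → (N_all ε d : ℝ) ≤ C * ε ^ (-(p + ε'))) :
    (sptExponents N_std).Nonempty ∧
    ((∀ ε ∈ Set.Ioo (0 : ℝ) 1, ∀ d : ℕ, 0 < d → N_all ε d ≤ N_std ε d) →
      p = sInf (sptExponents N_all) → sInf (sptExponents N_std) = p) := by
  have key : ∀ q : ℝ, p < q → q ∈ sptExponents N_std := by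
    intro q hq
    set s : ℝ := (p + q) / 2 with hs
    have hq0 : 0 < q := lt_of_le_of_lt hp hq
    have hs0 : 0 < s := by simp only [hs]; linarith
    have hsq : s < q := by simp only [hs]; linarith
    obtain ⟨C, hC, hCb⟩ := hall (s - p) (by linarith)
    have halls : ∀ ε ∈ Set.Ioo (0 : ℝ) 1, ∀ d : ℕ, 0 < d →
        (N_all ε d : ℝ) ≤ C * ε ^ (-s) := by
      intro ε hε d hd
      have := hCb ε hε d hd
      have h' : -(p + (s - p)) = -s := by ring
      rwa [h'] at this
    set ω : ℝ := (q - s) / s with hω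
    have hω0 : 0 < ω := div_pos (by linarith) hs0
    obtain ⟨Cω, hCω, hcb⟩ := hcomp ω hω0
    have hqω : -s * (1 + ω) = -q := by
      field_simp [hω]
      have hsω : s * ω = q - s := by
        rw [hω, mul_div_assoc', mul_comm, mul_div_assoc, div_self hs0.ne', mul_one]
      linarith
    refine ⟨le_of_lt hq0, Cω * (C * 4 ^ s + 1) ^ (1 + ω), by positivity, ?_⟩
    intro ε hε d hd
    obtain ⟨hε0, hε1⟩ := hε
    have hε4 : ε / 4 ∈ Set.Ioo (0 : ℝ) 1 := ⟨by linarith, by linarith⟩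
    have hrw : (ε / 4 : ℝ) ^ (-s) = 4 ^ s * ε ^ (-s) := by
      rw [Real.div_rpow hε0.le (by norm_num : (0:ℝ) ≤ 4), Real.rpow_neg hε0.le,
        Real.rpow_neg (by norm_num : (0:ℝ) ≤ 4)]
      rw [div_eq_mul_inv, inv_inv, mul_comm]
    have h1 : (N_all (ε / 4) d : ℝ) ≤ C * 4 ^ s * ε ^ (-s) := by
      have := halls (ε / 4) hε4 d hd
      rw [hrw] at this
      linarith [this]
    have hεpow1 : (1 : ℝ) ≤ ε ^ (-s) := by
      rw [Real.rpow_neg hε0.le]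
      rw [one_le_inv_iff₀]
      exact ⟨Real.rpow_pos_of_pos hε0 s, Real.rpow_le_one hε0.le hε1.le hs0.le⟩
    have h2 : (N_all (ε / 4) d : ℝ) + 1 ≤ (C * 4 ^ s + 1) * ε ^ (-s) := by
      nlinarith [h1]
    have h4 : ((N_all (ε / 4) d : ℝ) + 1) ^ (1 + ω) ≤ ((C * 4 ^ s + 1) * ε ^ (-s)) ^ (1 + ω) :=
      Real.rpow_le_rpow (by positivity) h2 (by linarith)
    have h5 : ((C * 4 ^ s + 1) * ε ^ (-s)) ^ (1 + ω) = (C * 4 ^ s + 1) ^ (1 + ω) * ε ^ (-q) := by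
      rw [Real.mul_rpow (by positivity) (by positivity), ← Real.rpow_mul hε0.le, hqω]
    have h3 := hcb ε ⟨hε0, hε1⟩ d hd
    calc (N_std ε d : ℝ) ≤ Cω * ((N_all (ε / 4) d : ℝ) + 1) ^ (1 + ω) := h3
      _ ≤ Cω * ((C * 4 ^ s + 1) * ε ^ (-s)) ^ (1 + ω) := by
          apply mul_le_mul_of_nonneg_left h4 (by linarith)
      _ = Cω * (C * 4 ^ s + 1) ^ (1 + ω) * ε ^ (-q) := by rw [h5]; ring
  have hne : (sptExponents N_std).Nonempty := ⟨p + 1, key (p + 1) (by linarith)⟩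
  refine ⟨hne, ?_⟩
  intro hle hpall
  have hbddS : BddBelow (sptExponents N_std) := ⟨0, fun x hx => hx.1⟩
  have hbddA : BddBelow (sptExponents N_all) := ⟨0, fun x hx => hx.1⟩
  have hsub : sptExponents N_std ⊆ sptExponents N_all := by
    rintro q ⟨hq0, C, hC, hb⟩
    refine ⟨hq0, C, hC, fun ε hε d hd => le_trans ?_ (hb ε hε d hd)⟩
    exact_mod_cast hle ε hε d hd
  have hge : p ≤ sInf (sptExponents N_std) := by
    apply le_csInf hne
    intro q hq
    rw [hpall]
    exact csInf_le hbddA (hsub hq)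
  have hle2 : sInf (sptExponents N_std) ≤ p := by
    apply le_of_forall_pos_le_add
    intro δ hδ
    exact csInf_le hbddS (key (p + δ) (by linarith))
  linarith
end

section
/- Let N_std, N_all : (0,1) × ℕ → ℕ, and suppose that for all sufficiently small ω, δ > 0 there is C_{ω,δ} ≥ 1 with N_std(ε, d) ≤ C_{ω,δ}·(N_all(ε/A_δ, d) + 1)^{1+ω} for all ε ∈ (0, A_δ·1) with ε/A_δ ∈ (0,1) and d ∈ ℕ, where A_δ = (1 + 1/(12 ln(1/δ)))^{1/2}(1-δ)^{-1/2}. If N_all is quasi-polynomially tractable, i.e., N_all(ε, d) ≤ C·exp(t(1 + ln d)(1 + ln ε^{-1})) for some C ≥ 1, t ≥ 0 and all d, ε, then N_std(ε, d) ≤ C'·exp(t*·(1 + ln d)(1 + ln ε^{-1})) with t* = (1+ω)(1 + ln A_δ)·t and some constant C' depending on C, ω, δ. -/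
noncomputable def Adelta (δ : ℝ) : ℝ :=
  Real.sqrt (1 + 1 / (12 * Real.log (1 / δ))) * (Real.sqrt (1 - δ))⁻¹

lemma one_le_Adelta {δ : ℝ} (h0 : 0 < δ) (h1 : δ < 1) : 1 ≤ Adelta δ := by
  unfold Adelta
  have hL : 0 < Real.log (1 / δ) := Real.log_pos (by rw [lt_div_iff₀ h0]; linarith)
  have ha : (1:ℝ) ≤ Real.sqrt (1 + 1 / (12 * Real.log (1 / δ))) := by
    have h0 : 0 ≤ 1 / (12 * Real.log (1 / δ)) := by positivity
    have := Real.sqrt_le_sqrt (show (1:ℝ) ≤ 1 + 1 / (12 * Real.log (1 / δ)) by linarith)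
    simpa using this
  have hb : Real.sqrt (1 - δ) ≤ 1 := by
    have := Real.sqrt_le_sqrt (show 1 - δ ≤ 1 by linarith)
    simpa using this
  have hbpos : 0 < Real.sqrt (1 - δ) := Real.sqrt_pos.mpr (by linarith)
  have hbinv : (1:ℝ) ≤ (Real.sqrt (1 - δ))⁻¹ := one_le_inv_iff₀.mpr ⟨hbpos, hb⟩
  nlinarith

lemma log_Adelta_nonneg {δ : ℝ} (hδ : 0 < δ) : 0 ≤ Real.log (Adelta δ) := by
  rcases lt_or_ge δ 1 with h | h
  · exact Real.log_nonneg (one_le_Adelta hδ h)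
  · have : Real.sqrt (1 - δ) = 0 := Real.sqrt_eq_zero'.mpr (by linarith)
    unfold Adelta
    rw [this]
    simp

lemma Adelta_le {δ s : ℝ} (hs : 0 < s) (hs1 : s ≤ 1) (hδ : 0 < δ) (h1 : δ ≤ s / 2)
    (h2 : δ ≤ Real.exp (-(1 / (12 * s)))) : Adelta δ ≤ 1 + s := by
  have hδ1 : δ < 1 := by linarith
  have hL : 1 / (12 * s) ≤ Real.log (1 / δ) := by
    rw [one_div δ, Real.log_inv]
    have := Real.log_le_log hδ h2
    rw [Real.log_exp] at this
    linarith
  have hLpos : 0 < Real.log (1 / δ) := lt_of_lt_of_le (by positivity) hL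
  have ha : 1 + 1 / (12 * Real.log (1 / δ)) ≤ 1 + s := by
    have h12 : 1 / s ≤ 12 * Real.log (1 / δ) := by
      rw [div_le_iff₀ hs]
      have := (div_le_iff₀ (show (0:ℝ) < 12 * s by positivity)).mp hL
      nlinarith
    have := one_div_le_one_div_of_le (by positivity : (0:ℝ) < 1 / s) h12
    rw [one_div_one_div] at this
    linarith
  have hb : 0 < 1 - δ := by linarith
  have hbinv : (1 - δ)⁻¹ ≤ 1 + s := by
    rw [inv_eq_one_div, div_le_iff₀ hb]
    nlinarith
  have hrw : Adelta δ = Real.sqrt ((1 + 1 / (12 * Real.log (1 / δ))) * (1 - δ)⁻¹) := by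
    unfold Adelta
    rw [Real.sqrt_mul (by positivity), Real.sqrt_inv]
  rw [hrw]
  have : (1 + 1 / (12 * Real.log (1 / δ))) * (1 - δ)⁻¹ ≤ (1 + s) ^ 2 := by
    have h0 : 0 ≤ 1 / (12 * Real.log (1 / δ)) := by positivity
    have h0' : 0 < (1 - δ)⁻¹ := by positivity
    nlinarith
  calc Real.sqrt ((1 + 1 / (12 * Real.log (1 / δ))) * (1 - δ)⁻¹)
      ≤ Real.sqrt ((1 + s) ^ 2) := Real.sqrt_le_sqrt this
    _ = 1 + s := Real.sqrt_sq (by linarith)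

set_option maxHeartbeats 1000000 in
theorem stmt_16 (N_std N_all : ℝ → ℕ → ℕ) (ω₀ δ₀ : ℝ) (hω₀ : 0 < ω₀) (hδ₀ : 0 < δ₀)
    (hcomp : ∀ ω ∈ Set.Ioo (0 : ℝ) ω₀, ∀ δ ∈ Set.Ioo (0 : ℝ) δ₀, ∃ Cωδ : ℝ, 1 ≤ Cωδ ∧
      ∀ ε ∈ Set.Ioo (0 : ℝ) 1, ε / Adelta δ ∈ Set.Ioo (0 : ℝ) 1 → ∀ d : ℕ, 0 < d →
        (N_std ε d : ℝ) ≤ Cωδ * ((N_all (ε / Adelta δ) d : ℝ) + 1) ^ (1 + ω))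
    (C t : ℝ) (hC : 1 ≤ C) (ht : 0 ≤ t)
    (hall : ∀ ε ∈ Set.Ioo (0 : ℝ) 1, ∀ d : ℕ, 0 < d →
      (N_all ε d : ℝ) ≤ C * Real.exp (t * (1 + Real.log d) * (1 + Real.log ε⁻¹))) :
    ∀ ω ∈ Set.Ioo (0 : ℝ) ω₀, ∀ δ ∈ Set.Ioo (0 : ℝ) δ₀, ∃ C' : ℝ, 0 < C' ∧
      ∀ ε ∈ Set.Ioo (0 : ℝ) 1, ∀ d : ℕ, 0 < d →
        (N_std ε d : ℝ) ≤ C' * Real.exp ((1 + ω) * (1 + Real.log (Adelta δ)) * t *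
          (1 + Real.log d) * (1 + Real.log ε⁻¹)) := by
  intro ω hω δ hδ
  obtain ⟨hω0, hωω₀⟩ := hω
  set s : ℝ := ω / (2 * (1 + ω)) with hs_def
  have hω1 : (0:ℝ) < 1 + ω := by linarith
  have hs : 0 < s := by positivity
  have hs1 : s ≤ 1 := by
    rw [hs_def, div_le_one (by positivity)]
    linarith
  set δ' : ℝ := min (δ₀ / 2) (min (s / 2) (Real.exp (-(1 / (12 * s))))) with hδ'_def
  have hδ'pos : 0 < δ' := by
    apply lt_min (by positivity) (lt_min (by positivity) (Real.exp_pos _))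
  have hδ'δ₀ : δ' < δ₀ := lt_of_le_of_lt (min_le_left _ _) (by linarith)
  have hδ's2 : δ' ≤ s / 2 := le_trans (min_le_right _ _) (min_le_left _ _)
  have hδ'e : δ' ≤ Real.exp (-(1 / (12 * s))) := le_trans (min_le_right _ _) (min_le_right _ _)
  have hδ'1 : δ' < 1 := by linarith
  set A : ℝ := Adelta δ' with hA_def
  have hA1 : 1 ≤ A := one_le_Adelta hδ'pos hδ'1
  have hAs : A ≤ 1 + s := Adelta_le hs hs1 hδ'pos hδ's2 hδ'e
  have hA0 : 0 < A := by linarith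
  obtain ⟨Cωδ, hCωδ, hN⟩ := hcomp (ω / 2) ⟨by linarith, by linarith⟩ δ' ⟨hδ'pos, hδ'δ₀⟩
  refine ⟨Cωδ * (2 * C) ^ (1 + ω / 2), by positivity, ?_⟩
  intro ε hε d hd
  have hε0 := hε.1
  have hε1 := hε.2
  have hεA : ε / A ∈ Set.Ioo (0:ℝ) 1 := by
    constructor
    · positivity
    · rw [div_lt_one hA0]; linarith
  have h1 := hN ε hε hεA d hd
  have h2 := hall (ε / A) hεA d hd
  -- rewrite the log
  have hlog : Real.log ((ε / A)⁻¹) = Real.log A + Real.log ε⁻¹ := by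
    rw [inv_div, Real.log_div (ne_of_gt hA0) (ne_of_gt hε0), Real.log_inv]
    ring
  rw [hlog] at h2
  set la := Real.log A with hla_def
  set lb := Real.log ε⁻¹ with hlb_def
  set ld := Real.log d with hld_def
  have hla : 0 ≤ la := Real.log_nonneg hA1
  have hlb : 0 ≤ lb := Real.log_nonneg (one_le_inv_iff₀.mpr ⟨hε0, le_of_lt hε1⟩)
  have hld : 0 ≤ ld := Real.log_nonneg (by exact_mod_cast hd)
  set E : ℝ := t * (1 + ld) * ((1 + la) * (1 + lb)) with hE_def
  have hE0 : 0 ≤ E := by positivity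
  have hEcmp : t * (1 + ld) * (1 + (la + lb)) ≤ E := by
    rw [hE_def]
    apply mul_le_mul_of_nonneg_left _ (by positivity : 0 ≤ t * (1 + ld))
    nlinarith
  have h2' : (N_all (ε / A) d : ℝ) ≤ C * Real.exp E :=
    le_trans h2 (mul_le_mul_of_nonneg_left (Real.exp_le_exp.mpr hEcmp) (by linarith))
  have hCE1 : 1 ≤ C * Real.exp E := by
    have := Real.one_le_exp hE0
    nlinarith
  have hplus : (N_all (ε / A) d : ℝ) + 1 ≤ 2 * C * Real.exp E := by linarith
  have hrpow : ((N_all (ε / A) d : ℝ) + 1) ^ (1 + ω / 2)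
      ≤ (2 * C * Real.exp E) ^ (1 + ω / 2) :=
    Real.rpow_le_rpow (by positivity) hplus (by linarith)
  have heq : (2 * C * Real.exp E) ^ (1 + ω / 2)
      = (2 * C) ^ (1 + ω / 2) * Real.exp ((1 + ω / 2) * E) := by
    rw [Real.mul_rpow (by positivity) (Real.exp_pos _).le, ← Real.exp_mul, mul_comm E]
  -- exponent comparison
  have hT : (1 + ω / 2) * (1 + la) ≤ (1 + ω) * (1 + Real.log (Adelta δ)) := by
    have hls : la ≤ s := by
      calc la ≤ Real.log (1 + s) := Real.log_le_log hA0 hAs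
        _ ≤ s := by
            have := Real.log_le_sub_one_of_pos (show (0:ℝ) < 1 + s by linarith)
            linarith
    have hkey : (1 + ω / 2) * (1 + s) ≤ 1 + ω := by
      have hmul : s * (2 * (1 + ω)) = ω := by
        rw [hs_def]; field_simp
      nlinarith [mul_nonneg hs.le hω0.le]
    have hlogδ : 0 ≤ Real.log (Adelta δ) := log_Adelta_nonneg hδ.1
    calc (1 + ω / 2) * (1 + la) ≤ (1 + ω / 2) * (1 + s) := by nlinarith
      _ ≤ 1 + ω := hkey
      _ ≤ (1 + ω) * (1 + Real.log (Adelta δ)) := by nlinarith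
  have hexp : (1 + ω / 2) * E ≤ (1 + ω) * (1 + Real.log (Adelta δ)) * t * (1 + ld) * (1 + lb) := by
    have h := mul_le_mul_of_nonneg_right hT (show 0 ≤ t * (1 + ld) * (1 + lb) by positivity)
    calc (1 + ω / 2) * E = (1 + ω / 2) * (1 + la) * (t * (1 + ld) * (1 + lb)) := by
          rw [hE_def]; ring
      _ ≤ (1 + ω) * (1 + Real.log (Adelta δ)) * (t * (1 + ld) * (1 + lb)) := h
      _ = (1 + ω) * (1 + Real.log (Adelta δ)) * t * (1 + ld) * (1 + lb) := by ring
  calc (N_std ε d : ℝ) ≤ Cωδ * ((N_all (ε / A) d : ℝ) + 1) ^ (1 + ω / 2) := h1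
    _ ≤ Cωδ * ((2 * C) ^ (1 + ω / 2) * Real.exp ((1 + ω / 2) * E)) := by
        rw [← heq]
        exact mul_le_mul_of_nonneg_left hrpow (by linarith)
    _ ≤ Cωδ * ((2 * C) ^ (1 + ω / 2) *
          Real.exp ((1 + ω) * (1 + Real.log (Adelta δ)) * t * (1 + ld) * (1 + lb))) := by
        apply mul_le_mul_of_nonneg_left _ (by linarith)
        exact mul_le_mul_of_nonneg_left (Real.exp_le_exp.mpr hexp) (by positivity)
    _ = Cωδ * (2 * C) ^ (1 + ω / 2) *
          Real.exp ((1 + ω) * (1 + Real.log (Adelta δ)) * t * (1 + ld) * (1 + lb)) := by ring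
end
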